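/- Let G be a finite group possessing a real element x and a real involution i with x, i not central, such that x and i commute, x has odd order coprime to 2, the conjugacy class size of x is even, the conjugacy class size of i is odd and greater than 1, and gcd(|x^G|, |i^G|) = 1. Then 2·p divides |(xi)^G| for every prime p dividing |i^G|. -/

import Mathlib

/-- An element `x` of a group is *real* if it is conjugate to its inverse. -/
def IsRealEl (G : Type*) [Group G] (x : G) : Prop := ∃ g : G, g⁻¹ * x * g = x⁻¹

/-- The size of the conjugacy class of `x` in `G`. -/
noncomputable def clSize (G : Type*) [Group G] (x : G) : ℕ := Nat.card {y : G // IsConj x y}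

lemma clSize_eq_index {G : Type*} [Group G] (g : G) :
    clSize G g = (Subgroup.centralizer {g}).index := by
  have e1 : {y : G // IsConj g y} ≃ MulAction.orbit (ConjAct G) g :=
    Equiv.subtypeEquivRight fun y => by
      rw [ConjAct.mem_orbit_conjAct, isConj_comm]
  have e2 := MulAction.orbitEquivQuotientStabilizer (ConjAct G) g
  rw [clSize, Nat.card_congr (e1.trans e2), ← Subgroup.index_eq_card,
    Subgroup.centralizer_eq_comap_stabilizer]
  exact (Subgroup.index_comap_of_surjective (MulAction.stabilizer (ConjAct G) g)
    (f := ConjAct.toConjAct.toMonoidHom) ConjAct.toConjAct.surjective).symm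

lemma clSize_dvd {G : Type*} [Group G] {g h : G}
    (H : ∀ z : G, z * h = h * z → z * g = g * z) : clSize G g ∣ clSize G h := by
  rw [clSize_eq_index, clSize_eq_index]
  apply Subgroup.index_dvd_of_le
  intro z hz
  rw [Subgroup.mem_centralizer_iff] at *
  intro y hy
  rw [Set.mem_singleton_iff] at hy
  subst hy
  exact (H z (hz h rfl).symm).symm

theorem stmt_13 {G : Type*} [Group G] [Finite G] (x i : G)
    (hx : IsRealEl G x) (hi : IsRealEl G i)
    (hinv : i ^ 2 = 1) (hine : i ≠ 1)
    (hxnc : x ∉ Subgroup.center G) (hinc : i ∉ Subgroup.center G)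
    (hcomm : x * i = i * x) (hxodd : Odd (orderOf x))
    (hxeven : Even (clSize G x)) (hiodd : Odd (clSize G i)) (hione : 1 < clSize G i)
    (hcop : Nat.Coprime (clSize G x) (clSize G i)) :
    ∀ p : ℕ, p.Prime → p ∣ clSize G i → 2 * p ∣ clSize G (x * i) := by
  intro p hp hpdvd
  obtain ⟨m, hm⟩ := hxodd
  -- (x*i)^2 = x^2
  have hsq : (x * i) ^ 2 = x ^ 2 := by
    have : (x * i) * (x * i) = x * x * (i * i) := by
      rw [mul_assoc x i (x * i), ← mul_assoc i x i, ← hcomm]; group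
    have hi2 : i * i = 1 := by rw [← sq]; exact hinv
    rw [sq, sq, this, hi2, mul_one]
  -- x is a power of x*i
  have hxpow : x = (x * i) ^ (2 * (m + 1)) := by
    have : (x * i) ^ (2 * (m + 1)) = x ^ (2 * (m + 1)) := by
      rw [pow_mul, hsq, ← pow_mul]
    rw [this]
    have : 2 * (m + 1) = orderOf x + 1 := by omega
    rw [this, pow_succ, pow_orderOf_eq_one, one_mul]
  -- anyone commuting with x*i commutes with x and with i
  have key : ∀ z : G, z * (x * i) = (x * i) * z →
      z * x = x * z ∧ z * i = i * z := by
    intro z hz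
    have hcz : Commute z (x * i) := hz
    have hzx : z * x = x * z := by
      have := (hcz.pow_right (2 * (m + 1)))
      rwa [← hxpow] at this
    refine ⟨hzx, ?_⟩
    have hi' : i = x⁻¹ * (x * i) := by group
    have : Commute z (x⁻¹ * (x * i)) :=
      (Commute.inv_right (hzx : Commute z x)).mul_right hcz
    rw [← hi'] at this
    exact this
  have d1 : clSize G x ∣ clSize G (x * i) := clSize_dvd fun z hz => (key z hz).1
  have d2 : clSize G i ∣ clSize G (x * i) := clSize_dvd fun z hz => (key z hz).2
  have h2 : 2 ∣ clSize G (x * i) := dvd_trans hxeven.two_dvd d1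
  have hpd : p ∣ clSize G (x * i) := dvd_trans hpdvd d2
  have hpodd : p ≠ 2 := by
    rintro rfl
    exact (Nat.not_even_iff_odd.mpr hiodd) ((even_iff_two_dvd).mpr hpdvd)
  have hcop2 : Nat.Coprime 2 p :=
    (Nat.coprime_primes Nat.prime_two hp).mpr (Ne.symm hpodd)
  exact Nat.Coprime.mul_dvd_of_dvd_of_dvd hcop2 h2 hpd
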